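/- If π is an LS-path of degree r ≥ 1 over (S, ≤, b), then there exist LS-paths π_1, π_2, …, π_r of degree 1 such that max supp π_h ≤ min supp π_{h+1} for all h = 1, …, r−1 and π = π_1 + π_2 + ⋯ + π_r as functions on {0,…,N}. -/
import Mathlib


open Finset MvPolynomial

/-- `Mf b i` is `M_i = lcm(b_{i-1}, b_i)`, with the convention `b_{-1} = 1`
(the convention `b_N = 1` is imposed as a hypothesis in the statements). -/
def Mf (b : ℕ → ℕ) (i : ℕ) : ℕ := Nat.lcm (if i = 0 then 1 else b (i - 1)) (b i)

/-- An LS-path of degree `r` over the totally ordered set `{0, …, N}` with bonds `b`: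
a function `π : {0,…,N} → ℚ` (modelled as `π : ℕ → ℚ` vanishing above `N`) with
nonnegative values, integrality `b_j·(π 0 + ⋯ + π j) ∈ ℤ` for all `0 ≤ j ≤ N-1`,
and total sum `π 0 + ⋯ + π N = r`. -/
def IsLSPath (N : ℕ) (b : ℕ → ℕ) (r : ℕ) (π : ℕ → ℚ) : Prop :=
  (∀ i, 0 ≤ π i) ∧ (∀ i, N < i → π i = 0) ∧
  (∀ j < N, ∃ k : ℤ, (b j : ℚ) * (∑ i ∈ Finset.range (j + 1), π i) = k) ∧
  (∑ i ∈ Finset.range (N + 1), π i = r)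

/-- `SuppLE π π'` says `max supp π ≤ min supp π'`:
every element of the support of `π` is `≤` every element of the support of `π'`. -/
def SuppLE (π π' : ℕ → ℚ) : Prop := ∀ i j, π i ≠ 0 → π' j ≠ 0 → i ≤ j

/-- Clamp of `x` to the interval `[h, h+1]`. -/
noncomputable def clampQ (h : ℕ) (x : ℚ) : ℚ := min (max x (h : ℚ)) ((h : ℚ) + 1)

lemma clampQ_mono (h : ℕ) {x y : ℚ} (hxy : x ≤ y) : clampQ h x ≤ clampQ h y :=
  min_le_min (max_le_max hxy le_rfl) le_rfl

lemma clampQ_lip (h : ℕ) {x y : ℚ} (hxy : x ≤ y) : clampQ h y - clampQ h x ≤ y - x := by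
  simp only [clampQ, min_def, max_def]
  split_ifs <;> linarith

lemma clampQ_le (h : ℕ) (x : ℚ) : clampQ h x ≤ (h : ℚ) + 1 := min_le_right _ _

lemma le_clampQ (h : ℕ) (x : ℚ) : (h : ℚ) ≤ clampQ h x :=
  le_min (le_max_right _ _) (by linarith)

lemma clampQ_of_le (h : ℕ) {x : ℚ} (hx : x ≤ (h : ℚ)) : clampQ h x = (h : ℚ) := by
  rw [clampQ, max_eq_right hx, min_eq_left (by linarith)]

lemma clampQ_of_ge (h : ℕ) {x : ℚ} (hx : (h : ℚ) + 1 ≤ x) : clampQ h x = (h : ℚ) + 1 := by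
  have : (h : ℚ) ≤ x := by linarith
  simp [clampQ, max_eq_left this, min_eq_right hx]

lemma clampQ_of_mem (h : ℕ) {x : ℚ} (h1 : (h : ℚ) ≤ x) (h2 : x ≤ (h : ℚ) + 1) :
    clampQ h x = x := by
  simp [clampQ, max_eq_left h1, min_eq_left h2]

lemma sumClampQ (r : ℕ) : ∀ x : ℚ, 0 ≤ x → x ≤ (r : ℚ) →
    ∑ h ∈ Finset.range r, clampQ h x = x + ∑ h ∈ Finset.range r, (h : ℚ) := by
  induction r with
  | zero =>
    intro x h0 h1
    simp only [Nat.cast_zero] at h1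
    simpa using (le_antisymm h1 h0).symm
  | succ n ih =>
    intro x h0 h1
    rw [Finset.sum_range_succ, Finset.sum_range_succ]
    rcases le_total x (n : ℚ) with hx | hx
    · rw [ih x h0 hx, clampQ_of_le n hx]
      ring
    · have hx1 : x ≤ (n : ℚ) + 1 := by push_cast at h1; linarith
      rw [clampQ_of_mem n hx hx1]
      have : ∀ h ∈ Finset.range n, clampQ h x = (h : ℚ) + 1 := by
        intro h hh
        rw [Finset.mem_range] at hh
        apply clampQ_of_ge
        have : (h : ℚ) + 1 ≤ (n : ℚ) := by exact_mod_cast hh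
        linarith
      rw [Finset.sum_congr rfl this, Finset.sum_add_distrib]
      simp
      ring

theorem stmt2 (N : ℕ) (hN : 1 ≤ N) (b : ℕ → ℕ) (hb : ∀ i < N, 0 < b i) (hbN : b N = 1)
    (r : ℕ) (hr : 1 ≤ r) (π : ℕ → ℚ) (hπ : IsLSPath N b r π) :
    ∃ πs : ℕ → (ℕ → ℚ),
      (∀ h < r, IsLSPath N b 1 (πs h)) ∧
      (∀ h, h + 1 < r → SuppLE (πs h) (πs (h + 1))) ∧
      (∀ i, π i = ∑ h ∈ Finset.range r, πs h i) := by
  obtain ⟨hnn, hvan, hint, hsum⟩ := hπ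
  set F : ℕ → ℚ := fun j => ∑ i ∈ Finset.range j, π i with hF
  have hmono : Monotone F := by
    intro a c hac
    exact Finset.sum_le_sum_of_subset_of_nonneg (Finset.range_subset_range.2 hac)
      (fun i _ _ => hnn i)
  have hF0 : F 0 = 0 := by simp [hF]
  have hFN : F (N + 1) = (r : ℚ) := hsum
  have hFnn : ∀ j, 0 ≤ F j := fun j => Finset.sum_nonneg (fun i _ => hnn i)
  have hFle : ∀ j, F j ≤ (r : ℚ) := by
    intro j
    rcases le_total j (N + 1) with hj | hj
    · rw [← hFN]; exact hmono hj
    · have : F (N + 1) = F j := by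
        apply Finset.sum_subset (Finset.range_subset_range.2 hj)
        intro i _ hi
        rw [Finset.mem_range, not_lt] at hi
        exact hvan i (by omega)
      rw [← this, hFN]
  have hstep : ∀ i, F (i + 1) - F i = π i := by
    intro i
    simp [hF, Finset.sum_range_succ]
  set πs : ℕ → ℕ → ℚ := fun h i => clampQ h (F (i + 1)) - clampQ h (F i) with hπs
  refine ⟨πs, ?_, ?_, ?_⟩
  · -- each slice is an LS-path of degree 1
    intro h hh
    have hmon : ∀ i, clampQ h (F i) ≤ clampQ h (F (i + 1)) :=
      fun i => clampQ_mono h (hmono (Nat.le_succ i))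
    have htel : ∀ n, ∑ i ∈ Finset.range n, (clampQ h (F (i + 1)) - clampQ h (F i))
        = clampQ h (F n) - (h : ℚ) := by
      intro n
      rw [Finset.sum_range_sub (fun i => clampQ h (F i)) n, hF0,
        show clampQ h (0 : ℚ) = (h : ℚ) from clampQ_of_le h (by positivity)]
    refine ⟨fun i => by simp only [hπs]; linarith [hmon i], ?_, ?_, ?_⟩
    · intro i hi
      simp only [hπs]
      have h1 : clampQ h (F (i + 1)) - clampQ h (F i) ≤ F (i + 1) - F i :=
        clampQ_lip h (hmono (Nat.le_succ i))
      have h2 := hstep i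
      have h3 := hvan i hi
      have := hmon i
      linarith
    · intro j hj
      simp only [hπs]
      rw [htel (j + 1)]
      rcases le_total (F (j + 1)) (h : ℚ) with hc | hc
      · exact ⟨0, by rw [clampQ_of_le h hc]; push_cast; ring⟩
      · rcases le_total ((h : ℚ) + 1) (F (j + 1)) with hc2 | hc2
        · exact ⟨b j, by rw [clampQ_of_ge h hc2]; push_cast; ring⟩
        · obtain ⟨k, hk⟩ := hint j hj
          refine ⟨k - (b j : ℤ) * h, ?_⟩
          rw [clampQ_of_mem h hc hc2]
          have : (b j : ℚ) * F (j + 1) = (k : ℚ) := hk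
          push_cast
          linarith [this]
    · simp only [hπs]
      rw [htel (N + 1), hFN]
      have : (h : ℚ) + 1 ≤ (r : ℚ) := by exact_mod_cast hh
      rw [clampQ_of_ge h this]
      ring
  · -- support condition
    intro h hh i j hi hj
    simp only [hπs] at hi hj
    by_contra hij
    push_neg at hij
    have h1 : clampQ h (F i) < (h : ℚ) + 1 := by
      have hm : clampQ h (F i) ≤ clampQ h (F (i + 1)) := clampQ_mono h (hmono (Nat.le_succ i))
      have hne : clampQ h (F i) < clampQ h (F (i + 1)) := lt_of_le_of_ne hm (by
        intro he; apply hi; rw [he]; ring)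
      exact lt_of_lt_of_le hne (clampQ_le h _)
    have hFi : F i < (h : ℚ) + 1 := by
      by_contra hc
      push_neg at hc
      rw [clampQ_of_ge h hc] at h1
      exact lt_irrefl _ h1
    have h2 : (h : ℚ) + 1 < clampQ (h + 1) (F (j + 1)) := by
      have hm : clampQ (h + 1) (F j) ≤ clampQ (h + 1) (F (j + 1)) :=
        clampQ_mono (h + 1) (hmono (Nat.le_succ j))
      have hne : clampQ (h + 1) (F j) < clampQ (h + 1) (F (j + 1)) := lt_of_le_of_ne hm (by
        intro he; apply hj; rw [he]; ring)
      have := le_clampQ (h + 1) (F j)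
      push_cast at this ⊢
      linarith
    have hFj : (h : ℚ) + 1 < F (j + 1) := by
      by_contra hc
      push_neg at hc
      have : F (j + 1) ≤ ((h + 1 : ℕ) : ℚ) := by push_cast; linarith
      rw [clampQ_of_le (h + 1) this] at h2
      push_cast at h2
      linarith
    have : F (j + 1) ≤ F i := hmono (by omega)
    linarith
  · -- decomposition
    intro i
    simp only [hπs]
    rw [Finset.sum_sub_distrib,
      sumClampQ r (F (i + 1)) (hFnn _) (hFle _),
      sumClampQ r (F i) (hFnn _) (hFle _)]
    have := hstep i
    linarith
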